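/- With the notation of the pseudo-rearrangement lemma, for almost every k > 0 one has D(A(k))·(−A'(k)) = −(d/dk) ∫_{{|v| > k}} g(x) dx, where A is the distribution function of v. -/

import Mathlib

open MeasureTheory Set Filter Topology
open scoped ENNReal

namespace Stmt6Aux

/-- The CDF of a finite measure on `ℝ`, as a Stieltjes function. -/
noncomputable def cdfSt (μ : Measure ℝ) [IsFiniteMeasure μ] : StieltjesFunction ℝ where
  toFun := fun k => (μ (Iic k)).toReal
  mono' := fun a b hab => ENNReal.toReal_mono (measure_ne_top μ _)
    (measure_mono (Iic_subset_Iic.2 hab))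
  right_continuous' := by
    intro x
    have mono : Monotone (fun k => (μ (Iic k)).toReal) := fun a b hab =>
      ENNReal.toReal_mono (measure_ne_top μ _) (measure_mono (Iic_subset_Iic.2 hab))
    have key : Tendsto (fun n : ℕ => (μ (Iic (x + 1 / (n + 1)))).toReal) atTop
        (𝓝 ((μ (Iic x)).toReal)) := by
      have h1 : Tendsto (fun n : ℕ => μ (Iic (x + 1 / (n + 1)))) atTop
          (𝓝 (μ (⋂ n : ℕ, Iic (x + 1 / (n + 1 : ℝ))))) := by
        refine tendsto_measure_iInter_atTop
          (fun n => measurableSet_Iic.nullMeasurableSet) ?_ ⟨0, measure_ne_top μ _⟩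
        intro m n hmn
        refine Iic_subset_Iic.2 ?_
        have h1n : (1 : ℝ) / (n + 1) ≤ 1 / (m + 1) := by
          apply one_div_le_one_div_of_le
          · positivity
          · have : (m : ℝ) ≤ n := Nat.cast_le.2 hmn
            linarith
        linarith
      have h2 : (⋂ n : ℕ, Iic (x + 1 / (n + 1 : ℝ))) = Iic x := by
        ext y
        simp only [mem_iInter, mem_Iic]
        constructor
        · intro h
          by_contra hy
          push_neg at hy
          obtain ⟨n, hn⟩ := exists_nat_one_div_lt (sub_pos.2 hy)
          have := h n
          linarith
        · intro h n
          have : (0:ℝ) < 1 / (n + 1) := by positivity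
          linarith
      rw [h2] at h1
      exact (ENNReal.tendsto_toReal (measure_ne_top μ _)).comp h1
    have lim := mono.tendsto_nhdsGT x
    have hinf : sInf ((fun k => (μ (Iic k)).toReal) '' Ioi x) = (μ (Iic x)).toReal := by
      apply le_antisymm
      · refine ge_of_tendsto key (Eventually.of_forall fun n => csInf_le ?_ ?_)
        · refine ⟨(μ (Iic x)).toReal, ?_⟩
          rintro y ⟨z, hz, rfl⟩
          exact mono hz.le
        · refine ⟨x + 1 / (n + 1), ?_, rfl⟩
          have : (0:ℝ) < 1 / (n + 1) := by positivity
          simp only [mem_Ioi]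
          linarith
      · refine le_csInf ⟨(μ (Iic (x+1))).toReal, ⟨x+1, by simp, rfl⟩⟩ ?_
        rintro y ⟨z, hz, rfl⟩
        exact mono hz.le
    rw [hinf] at lim
    rw [← continuousWithinAt_Ioi_iff_Ici]
    exact lim

lemma cdfSt_apply (μ : Measure ℝ) [IsFiniteMeasure μ] (x : ℝ) :
    cdfSt μ x = (μ (Iic x)).toReal := rfl

lemma cdfSt_measure (μ : Measure ℝ) [IsFiniteMeasure μ] : (cdfSt μ).measure = μ := by
  refine Measure.ext_of_Ioc _ _ fun a b hab => ?_
  rw [StieltjesFunction.measure_Ioc, cdfSt_apply, cdfSt_apply]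
  have hsplit : μ (Iic b) = μ (Iic a) + μ (Ioc a b) := by
    rw [← Iic_union_Ioc_eq_Iic hab.le, measure_union (Iic_disjoint_Ioc le_rfl) measurableSet_Ioc]
  rw [hsplit, ENNReal.toReal_add (measure_ne_top μ _) (measure_ne_top μ _),
    add_sub_cancel_left, ENNReal.ofReal_toReal (measure_ne_top μ _)]

/-- The survival function of a finite measure on `ℝ` is a.e. differentiable,
with derivative the negative of the Radon–Nikodym derivative. -/
lemma survival_ae_hasDerivAt (μ : Measure ℝ) [IsFiniteMeasure μ] :
    ∀ᵐ k ∂(volume : Measure ℝ), HasDerivAt (fun t => (μ (Ioi t)).toReal)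
      (-(μ.rnDeriv volume k).toReal) k := by
  filter_upwards [(cdfSt μ).ae_hasDerivAt] with k hk
  rw [cdfSt_measure] at hk
  have hfun : ∀ t, (μ (Ioi t)).toReal = (μ univ).toReal - cdfSt μ t := by
    intro t
    rw [cdfSt_apply]
    have huniv : μ univ = μ (Iic t) + μ (Ioi t) := by
      rw [← Iic_union_Ioi (a := t), measure_union (Iic_disjoint_Ioi le_rfl) measurableSet_Ioi]
    rw [huniv, ENNReal.toReal_add (measure_ne_top μ _) (measure_ne_top μ _)]
    ring
  have h2 : HasDerivAt (fun t => (μ univ).toReal - cdfSt μ t)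
      (-(μ.rnDeriv volume k).toReal) k := hk.const_sub _
  exact h2.congr_of_eventuallyEq (Eventually.of_forall hfun)

/-- If `σ ≪ ρ`, then a.e. where the density of `ρ` w.r.t. Lebesgue vanishes, so does that
of `σ`. -/
lemma rnDeriv_zero_of_ac {ρ σ : Measure ℝ} [IsFiniteMeasure ρ] [IsFiniteMeasure σ]
    (h : σ ≪ ρ) :
    ∀ᵐ k ∂(volume : Measure ℝ), ρ.rnDeriv volume k = 0 → σ.rnDeriv volume k = 0 := by
  set Z := {k | ρ.rnDeriv volume k = 0} with hZ
  have hZm : MeasurableSet Z := Measure.measurable_rnDeriv ρ volume (measurableSet_singleton 0)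
  obtain ⟨S, hSm, hS1, hS2⟩ := Measure.mutuallySingular_singularPart ρ volume
  have hρZS : ρ (Z ∩ S) = 0 := by
    conv_lhs => rw [← Measure.singularPart_add_rnDeriv ρ volume]
    rw [Measure.add_apply]
    have h1 : ρ.singularPart volume (Z ∩ S) = 0 := measure_mono_null inter_subset_right hS1
    have h2 : volume.withDensity (ρ.rnDeriv volume) (Z ∩ S) = 0 := by
      rw [withDensity_apply _ (hZm.inter hSm)]
      rw [setLIntegral_congr_fun (hZm.inter hSm)
        (fun k hk => hk.1), lintegral_zero]
    rw [h1, h2, add_zero]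
  have hσZS : σ (Z ∩ S) = 0 := h hρZS
  have hwd : volume.withDensity (σ.rnDeriv volume) Z = 0 := by
    have hle := Measure.withDensity_rnDeriv_le σ volume
    have h1 : volume.withDensity (σ.rnDeriv volume) (Z ∩ S) = 0 :=
      le_antisymm (le_trans (hle _) hσZS.le) (zero_le)
    have h2 : volume.withDensity (σ.rnDeriv volume) (Z ∩ Sᶜ) = 0 :=
      withDensity_absolutelyContinuous volume _ (measure_mono_null inter_subset_right hS2)
    have hcover : Z ⊆ (Z ∩ S) ∪ (Z ∩ Sᶜ) := by
      intro k hk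
      by_cases hkS : k ∈ S
      · exact Or.inl ⟨hk, hkS⟩
      · exact Or.inr ⟨hk, hkS⟩
    exact measure_mono_null hcover (measure_union_null h1 h2)
  have hint : ∫⁻ k in Z, σ.rnDeriv volume k ∂volume = 0 := by
    rw [← withDensity_apply _ hZm]; exact hwd
  have hae := (lintegral_eq_zero_iff (Measure.measurable_rnDeriv σ volume)).1 hint
  rw [Filter.EventuallyEq, ae_restrict_iff' hZm] at hae
  filter_upwards [hae] with k hk hk0
  simpa using hk hk0

end Stmt6Aux
/-- Chain rule identity for the pseudo-rearrangement: for a.e. `k > 0`,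
`D(A(k))·(−A'(k)) = −(d/dk) ∫_{{|v|>k}} g`. -/
theorem stmt_6 {N : ℕ} (Ω : Set (EuclideanSpace ℝ (Fin N)))
    (hΩm : MeasurableSet Ω) (hΩb : Bornology.IsBounded Ω)
    (v : EuclideanSpace ℝ (Fin N) → ℝ) (hv : Measurable v)
    (A : ℝ → ℝ) (hA : ∀ k, A k = (volume {x ∈ Ω | |v x| > k}).toReal)
    (g : EuclideanSpace ℝ (Fin N) → ℝ) (hg : 0 ≤ g)
    (hgint : IntegrableOn g Ω)
    (vbar : ℝ → ℝ) (hvbar : ∀ s, vbar s = sInf {t : ℝ | 0 ≤ t ∧ A t < s})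
    (F : ℝ → Set (EuclideanSpace ℝ (Fin N)))
    (hFmeas : ∀ s, MeasurableSet (F s))
    (hFsub : ∀ s, F s ⊆ Ω)
    (hFvol : ∀ s ∈ Icc (0 : ℝ) (volume Ω).toReal, (volume (F s)).toReal = s)
    (hFmono : ∀ s₁ s₂, s₁ < s₂ → F s₁ ⊆ F s₂)
    (hFadapted : ∀ s ∈ Icc (0 : ℝ) (volume Ω).toReal,
      {x ∈ Ω | |v x| > vbar s} ⊆ F s ∧ F s ⊆ {x ∈ Ω | |v x| ≥ vbar s})
    (D : ℝ → ℝ)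
    (hD : ∀ᵐ s ∂(volume.restrict (Ioo (0 : ℝ) (volume Ω).toReal)),
      HasDerivAt (fun t => ∫ x in F t, g x) (D s) s) :
    ∀ᵐ k ∂(volume.restrict (Ioi (0 : ℝ))),
      D (A k) * (-(deriv A k))
        = -(deriv (fun t => ∫ x in {x ∈ Ω | |v x| > t}, g x) k) := by
  classical
  have hΩfin : volume Ω ≠ ⊤ := hΩb.measure_lt_top.ne
  set μΩ : ℝ := (volume Ω).toReal with hμΩdef
  have hv' : Measurable fun x => |v x| := hv.abs
  -- the distribution measure of `|v|`
  set ρ : Measure ℝ := Measure.map (fun x => |v x|) (volume.restrict Ω) with hρdef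
  have hsetmeas : ∀ k : ℝ, MeasurableSet {x ∈ Ω | |v x| > k} := by
    intro k
    exact hΩm.inter (hv' measurableSet_Ioi)
  have hρ_apply : ∀ k, ρ (Ioi k) = volume {x ∈ Ω | |v x| > k} := by
    intro k
    rw [hρdef, Measure.map_apply hv' measurableSet_Ioi,
      Measure.restrict_apply (hv' measurableSet_Ioi)]
    congr 1
    ext x
    simp only [mem_inter_iff, mem_preimage, mem_Ioi, mem_setOf_eq]
    tauto
  haveI hρfin : IsFiniteMeasure ρ := by
    constructor
    rw [hρdef, Measure.map_apply hv' MeasurableSet.univ, preimage_univ,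
      Measure.restrict_apply_univ]
    exact hΩfin.lt_top
  -- the `g`-weighted distribution measure of `|v|`
  set σm : Measure ℝ := Measure.map (fun x => |v x|)
      ((volume.restrict Ω).withDensity fun x => ENNReal.ofReal (g x)) with hσdef
  have hσ_apply : ∀ k, σm (Ioi k) = ENNReal.ofReal (∫ x in {x ∈ Ω | |v x| > k}, g x) := by
    intro k
    rw [hσdef, Measure.map_apply hv' measurableSet_Ioi,
      withDensity_apply _ (hv' measurableSet_Ioi),
      Measure.restrict_restrict (hv' measurableSet_Ioi)]
    have hset : (fun x => |v x|) ⁻¹' Ioi k ∩ Ω = {x ∈ Ω | |v x| > k} := by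
      ext x
      simp only [mem_inter_iff, mem_preimage, mem_Ioi, mem_setOf_eq]
      tauto
    rw [hset]
    exact (ofReal_integral_eq_lintegral_ofReal
      (hgint.mono_set (sep_subset _ _)) (Eventually.of_forall hg)).symm
  haveI hσfin : IsFiniteMeasure σm := by
    constructor
    rw [hσdef, Measure.map_apply hv' MeasurableSet.univ, preimage_univ,
      withDensity_apply _ MeasurableSet.univ, Measure.restrict_univ,
      ← ofReal_integral_eq_lintegral_ofReal hgint (Eventually.of_forall hg)]
    exact ENNReal.ofReal_lt_top
  have hac : σm ≪ ρ := by
    refine Measure.AbsolutelyContinuous.mk fun S hSm hS0 => ?_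
    rw [hρdef, Measure.map_apply hv' hSm] at hS0
    rw [hσdef, Measure.map_apply hv' hSm, withDensity_apply _ (hv' hSm)]
    exact setLIntegral_measure_zero _ _ hS0
  -- basic facts about `A`
  have hA' : ∀ k, A k = (ρ (Ioi k)).toReal := fun k => by rw [hA k, ← hρ_apply k]
  have hAnti : Antitone A := by
    intro a b hab
    rw [hA' a, hA' b]
    exact ENNReal.toReal_mono (measure_ne_top ρ _) (measure_mono (Ioi_subset_Ioi hab))
  have hA_nonneg : ∀ k, 0 ≤ A k := fun k => by rw [hA' k]; exact ENNReal.toReal_nonneg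
  have hA_le : ∀ k, A k ≤ μΩ := fun k => by
    rw [hA k, hμΩdef]
    exact ENNReal.toReal_mono hΩfin (measure_mono (sep_subset _ _))
  -- the functions `G` and `H`
  set G : ℝ → ℝ := fun t => ∫ x in F t, g x with hGdef
  set Hf : ℝ → ℝ := fun t => ∫ x in {x ∈ Ω | |v x| > t}, g x with hHfdef
  have hH : ∀ t, Hf t = (σm (Ioi t)).toReal := by
    intro t
    rw [hHfdef]
    simp only
    rw [hσ_apply t, ENNReal.toReal_ofReal (integral_nonneg hg)]
  -- volumes as `ENNReal.ofReal`
  have hvolF : ∀ s ∈ Icc (0:ℝ) μΩ, volume (F s) = ENNReal.ofReal s := by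
    intro s hs
    have hle : volume (F s) ≤ volume Ω := measure_mono (hFsub s)
    have hne : volume (F s) ≠ ⊤ := (lt_of_le_of_lt hle hΩfin.lt_top).ne
    conv_lhs => rw [← ENNReal.ofReal_toReal hne]
    rw [hFvol s hs]
  have hvolSet : ∀ k, volume {x ∈ Ω | |v x| > k} = ENNReal.ofReal (A k) := fun k => by
    rw [hA k, ENNReal.ofReal_toReal
      (lt_of_le_of_lt (measure_mono (sep_subset _ _)) hΩfin.lt_top).ne]
  -- the key identity: `Hf = G ∘ A` on `(0, ∞)` (in fact everywhere it is proved below)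
  have key : ∀ k : ℝ, 0 < k → Hf k = G (A k) := by
    intro k _
    have hAk_mem : A k ∈ Icc (0:ℝ) μΩ := ⟨hA_nonneg k, hA_le k⟩
    rcases eq_or_lt_of_le (hA_nonneg k) with h0 | hpos
    · -- `A k = 0`: both sides are integrals over null sets
      have hsets : volume {x ∈ Ω | |v x| > k} = 0 := by
        rw [hvolSet k, ← h0]; simp
      have hF0 : volume (F (A k)) = 0 := by
        rw [hvolF _ hAk_mem, ← h0]; simp
      have e1 : volume.restrict {x ∈ Ω | |v x| > k} = 0 := Measure.restrict_eq_zero.2 hsets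
      have e2 : volume.restrict (F (A k)) = 0 := Measure.restrict_eq_zero.2 hF0
      rw [hHfdef, hGdef]
      simp only [e1, e2, integral_zero_measure]
    · -- `0 < A k`
      have hSne : {t : ℝ | 0 ≤ t ∧ A t < A k}.Nonempty := by
        have htend : Tendsto (fun n : ℕ => ρ (Ioi (n : ℝ))) atTop
            (𝓝 (ρ (⋂ n : ℕ, Ioi (n:ℝ)))) := by
          refine tendsto_measure_iInter_atTop
            (fun n => measurableSet_Ioi.nullMeasurableSet)
            (fun m n hmn => Ioi_subset_Ioi (Nat.cast_le.2 hmn)) ⟨0, measure_ne_top _ _⟩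
        have hempty : (⋂ n : ℕ, Ioi (n : ℝ)) = ∅ := by
          ext y
          simp only [mem_iInter, mem_Ioi, mem_empty_iff_false, iff_false]
          push_neg
          obtain ⟨n, hn⟩ := exists_nat_gt y
          exact ⟨n, hn.le⟩
        rw [hempty, measure_empty] at htend
        have htend' : Tendsto (fun n : ℕ => A (n:ℝ)) atTop (𝓝 0) := by
          have h1 := (ENNReal.tendsto_toReal (by simp : (0:ℝ≥0∞) ≠ ⊤)).comp htend
          simp only [ENNReal.toReal_zero] at h1
          exact h1.congr fun n => (hA' _).symm
        obtain ⟨n, hn⟩ := (htend'.eventually_lt_const hpos).exists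
        exact ⟨n, Nat.cast_nonneg n, hn⟩
      have hklb : ∀ t ∈ {t : ℝ | 0 ≤ t ∧ A t < A k}, k ≤ t := by
        rintro t ⟨_, htlt⟩
        by_contra hlt
        push_neg at hlt
        exact absurd htlt (not_lt.2 (hAnti hlt.le))
      have hkb : k ≤ vbar (A k) := by
        rw [hvbar]
        exact le_csInf hSne hklb
      have had := hFadapted (A k) hAk_mem
      rcases eq_or_lt_of_le hkb with hbk | hbk
      · -- `vbar (A k) = k`: `{|v| > k} ⊆ F (A k)`, equal measures
        have hsub : {x ∈ Ω | |v x| > k} ⊆ F (A k) := by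
          intro x hx
          exact had.1 ⟨hx.1, hbk ▸ hx.2⟩
        have haeq : {x ∈ Ω | |v x| > k} =ᵐ[volume] F (A k) :=
          ae_eq_of_subset_of_measure_ge hsub
            (by rw [hvolF _ hAk_mem, hvolSet k])
            (hsetmeas k).nullMeasurableSet
            (by rw [hvolF _ hAk_mem]; exact ENNReal.ofReal_ne_top)
        rw [hHfdef, hGdef]
        simp only
        exact setIntegral_congr_set haeq
      · -- `k < vbar (A k)`: `F (A k) ⊆ {|v| > k}`, equal measures
        have hsub : F (A k) ⊆ {x ∈ Ω | |v x| > k} := by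
          intro x hx
          have h2 := had.2 hx
          exact ⟨h2.1, lt_of_lt_of_le hbk h2.2⟩
        have haeq : F (A k) =ᵐ[volume] {x ∈ Ω | |v x| > k} :=
          ae_eq_of_subset_of_measure_ge hsub
            (by rw [hvolF _ hAk_mem, hvolSet k])
            (hFmeas _).nullMeasurableSet
            (by rw [hvolSet k]; exact ENNReal.ofReal_ne_top)
        rw [hHfdef, hGdef]
        simp only
        exact setIntegral_congr_set haeq.symm
  -- the exceptional set `E` for the a.e. differentiability of `G`
  have hbad : volume ({s | ¬ HasDerivAt G (D s) s} ∩ Ioo 0 μΩ) = 0 := by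
    have h1 : (volume.restrict (Ioo (0:ℝ) μΩ)) {s | ¬ HasDerivAt G (D s) s} = 0 :=
      ae_iff.1 hD
    rw [Measure.restrict_apply' measurableSet_Ioo] at h1
    exact h1
  set E : Set ℝ := toMeasurable volume ({s | ¬ HasDerivAt G (D s) s} ∩ Ioo 0 μΩ) with hEdef
  have hEm : MeasurableSet E := measurableSet_toMeasurable _ _
  have hE0 : volume E = 0 := by rw [hEdef, measure_toMeasurable]; exact hbad
  have hGd : ∀ s, s ∈ Ioo (0:ℝ) μΩ → s ∉ E → HasDerivAt G (D s) s := by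
    intro s hs hsE
    by_contra hns
    exact hsE (subset_toMeasurable _ _ ⟨hns, hs⟩)
  -- Sard-type argument: a.e. point with `deriv A ≠ 0` is mapped outside `E`
  have hAmeas : Measurable A := hAnti.measurable
  set K : Set ℝ := (Ioi (0:ℝ) ∩ A ⁻¹' E) ∩
      ({k | DifferentiableAt ℝ A k} ∩ {k | deriv A k ≠ 0}) with hKdef
  have hKm : MeasurableSet K := by
    refine (measurableSet_Ioi.inter (hAmeas hEm)).inter ?_
    exact (measurableSet_of_differentiableAt ℝ A).inter
      ((measurable_deriv A) (measurableSet_singleton (0:ℝ)).compl)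
  have hflat : ∀ k₁ k₂ : ℝ, k₁ ∈ K → k₁ < k₂ → A k₁ = A k₂ → False := by
    intro k₁ k₂ hk₁ h12 heq
    have hconst : ∀ y ∈ Icc k₁ k₂, A y = A k₁ := by
      intro y hy
      refine le_antisymm (hAnti hy.1) ?_
      rw [heq]
      exact hAnti hy.2
    have hu : UniqueDiffWithinAt ℝ (Icc k₁ k₂) k₁ :=
      (uniqueDiffOn_Icc h12) k₁ (left_mem_Icc.2 h12.le)
    have hd0 : HasDerivWithinAt A 0 (Icc k₁ k₂) k₁ :=
      (hasDerivWithinAt_const k₁ _ (A k₁)).congr hconst (hconst k₁ (left_mem_Icc.2 h12.le))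
    have hdA : HasDerivWithinAt A (deriv A k₁) (Icc k₁ k₂) k₁ :=
      hk₁.2.1.hasDerivAt.hasDerivWithinAt
    refine hk₁.2.2 ?_
    rw [← hdA.derivWithin hu, hd0.derivWithin hu]
  have hinj : InjOn A K := by
    intro k₁ hk₁ k₂ hk₂ heq
    by_contra hne
    rcases lt_or_gt_of_ne hne with h12 | h21
    · exact hflat k₁ k₂ hk₁ h12 heq
    · exact hflat k₂ k₁ hk₂ h21 heq.symm
  have himg : volume (A '' K) = 0 := by
    refine measure_mono_null ?_ hE0
    rintro _ ⟨k, hk, rfl⟩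
    exact hk.1.2
  have hKint : ∫⁻ k in K, ENNReal.ofReal
      |(((1 : ℝ →L[ℝ] ℝ).smulRight (deriv A k)).det)| ∂volume = volume (A '' K) := by
    refine lintegral_abs_det_fderiv_eq_addHaar_image volume hKm
      (f' := fun k => (1 : ℝ →L[ℝ] ℝ).smulRight (deriv A k)) ?_ hinj
    intro k hk
    exact (hk.2.1.hasDerivAt.hasDerivWithinAt :
      HasDerivWithinAt A (deriv A k) K k).hasFDerivWithinAt
  have hK0 : volume K = 0 := by
    simp only [ContinuousLinearMap.smulRight_one_eq_toSpanSingleton,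
      ContinuousLinearMap.det_toSpanSingleton] at hKint
    rw [himg] at hKint
    have hae := (lintegral_eq_zero_iff
      ((measurable_deriv A).abs.ennreal_ofReal)).1 hKint
    rw [Filter.EventuallyEq, ae_restrict_iff' hKm] at hae
    refine measure_eq_zero_iff_ae_notMem.2 ?_
    filter_upwards [hae] with k hk hkK
    have h1 := hk hkK
    simp only [Pi.zero_apply, ENNReal.ofReal_eq_zero] at h1
    exact hkK.2.2 (abs_nonpos_iff.1 h1)
  -- a.e. derivatives of `A` and `Hf`
  have hAdAe : ∀ᵐ k ∂(volume : Measure ℝ),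
      HasDerivAt A (-(ρ.rnDeriv volume k).toReal) k := by
    filter_upwards [Stmt6Aux.survival_ae_hasDerivAt ρ] with k hk
    exact hk.congr_of_eventuallyEq (Eventually.of_forall fun t => hA' t)
  have hHdAe : ∀ᵐ k ∂(volume : Measure ℝ),
      HasDerivAt Hf (-(σm.rnDeriv volume k).toReal) k := by
    filter_upwards [Stmt6Aux.survival_ae_hasDerivAt σm] with k hk
    exact hk.congr_of_eventuallyEq (Eventually.of_forall fun t => hH t)
  -- conclusion
  rw [ae_restrict_iff' measurableSet_Ioi]
  filter_upwards [hAdAe, hHdAe, Stmt6Aux.rnDeriv_zero_of_ac hac,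
    Measure.rnDeriv_lt_top ρ volume, measure_eq_zero_iff_ae_notMem.1 hK0]
    with k hAk hHk hzk hltk hKk hk0
  have hderivA : deriv A k = -(ρ.rnDeriv volume k).toReal := hAk.deriv
  by_cases hz : ρ.rnDeriv volume k = 0
  · have hσ0 := hzk hz
    have h1 : deriv A k = 0 := by rw [hderivA, hz]; simp
    have h2 : deriv Hf k = 0 := by rw [hHk.deriv, hσ0]; simp
    rw [h1, h2]
    ring
  · have hne : deriv A k ≠ 0 := by
      rw [hderivA]
      simp only [ne_eq, neg_eq_zero]
      intro h
      rcases ENNReal.toReal_eq_zero_iff _ |>.1 h with h' | h'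
      · exact hz h'
      · exact absurd h' hltk.ne
    have hdiff : DifferentiableAt ℝ A k := hAk.differentiableAt
    -- `A k` avoids `0` and `μΩ`
    have hAne0 : A k ≠ 0 := by
      intro h0
      have hconst : ∀ y ∈ Ici k, A y = A k := by
        intro y hy
        refine le_antisymm (hAnti hy) ?_
        rw [h0]
        exact hA_nonneg y
      have hu : UniqueDiffWithinAt ℝ (Ici k) k := uniqueDiffOn_Ici k k (mem_Ici.2 le_rfl)
      have hd0 : HasDerivWithinAt A 0 (Ici k) k :=
        (hasDerivWithinAt_const k _ (A k)).congr hconst (hconst k (mem_Ici.2 le_rfl))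
      refine hne ?_
      have e1 : derivWithin A (Ici k) k = 0 := hd0.derivWithin hu
      have e2 : derivWithin A (Ici k) k = -(ρ.rnDeriv volume k).toReal :=
        hAk.hasDerivWithinAt.derivWithin hu
      rw [hderivA, ← e2, e1]
    have hAneμ : A k ≠ μΩ := by
      intro h0
      have hconst : ∀ y ∈ Iic k, A y = A k := by
        intro y hy
        refine le_antisymm ?_ (hAnti hy)
        rw [h0]
        exact hA_le y
      have hu : UniqueDiffWithinAt ℝ (Iic k) k := uniqueDiffOn_Iic k k (mem_Iic.2 le_rfl)
      have hd0 : HasDerivWithinAt A 0 (Iic k) k :=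
        (hasDerivWithinAt_const k _ (A k)).congr hconst (hconst k (mem_Iic.2 le_rfl))
      refine hne ?_
      have e1 : derivWithin A (Iic k) k = 0 := hd0.derivWithin hu
      have e2 : derivWithin A (Iic k) k = -(ρ.rnDeriv volume k).toReal :=
        hAk.hasDerivWithinAt.derivWithin hu
      rw [hderivA, ← e2, e1]
    have hAIoo : A k ∈ Ioo (0:ℝ) μΩ :=
      ⟨(hA_nonneg k).lt_of_ne (Ne.symm hAne0), (hA_le k).lt_of_ne hAneμ⟩
    have hAnotE : A k ∉ E := by
      intro hmem
      exact hKk ⟨⟨hk0, hmem⟩, hdiff, hne⟩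
    have hGderiv : HasDerivAt G (D (A k)) (A k) := hGd (A k) hAIoo hAnotE
    have hAk' : HasDerivAt A (deriv A k) k := by rw [hderivA]; exact hAk
    have hchain : HasDerivAt (G ∘ A) (D (A k) * deriv A k) k := hGderiv.comp k hAk'
    have hHfA : Hf =ᶠ[𝓝 k] G ∘ A := by
      filter_upwards [isOpen_Ioi.mem_nhds hk0] with t ht
      exact key t ht
    have hHchain : HasDerivAt Hf (D (A k) * deriv A k) k :=
      hchain.congr_of_eventuallyEq hHfA
    rw [hHchain.deriv]
    ring
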